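/- Let Φx ∈ ℝ^{(T+1)n_x×(T+1)n_x} and Φu ∈ ℝ^{(T+1)n_u×(T+1)n_x} be block-lower-triangular matrices satisfying (I − Z𝒜)Φx − ZℬΦu = I, and let Σ ∈ ℝ^{(T+1)n_x×(T+1)n_x} be block-lower-triangular and invertible. Then Φ̃x := ΦxΣ and Φ̃u := ΦuΣ are block-lower-triangular and satisfy (I − Z𝒜)Φ̃x − ZℬΦ̃u = Σ; moreover Φx and Φ̃x are invertible and the two parameterizations yield the same state feedback controller, i.e. Φ̃uΦ̃x^{-1} = ΦuΦx^{-1}. -/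

import Mathlib

open Matrix Finset

noncomputable section

/-- A `(T+1)×(T+1)`-block matrix (with `p×q` blocks) is block-lower-triangular if its
`(i,j)` block vanishes whenever `j > i`. -/
def IsBLT {T p q : ℕ} (M : Matrix (Fin (T+1) × Fin p) (Fin (T+1) × Fin q) ℝ) : Prop :=
  ∀ (i j : Fin (T+1)) (a : Fin p) (b : Fin q), i < j → M (i, a) (j, b) = 0

/-- The block-downshift matrix `Z`: its `(i,j)` block is the identity if `i = j+1`,
and zero otherwise. -/
def dshift (T n : ℕ) : Matrix (Fin (T+1) × Fin n) (Fin (T+1) × Fin n) ℝ :=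
  Matrix.of fun i j => if ((i.1 : ℕ) = (j.1 : ℕ) + 1 ∧ i.2 = j.2) then (1 : ℝ) else 0

/-- `blkdiag(M, …, M, 0)`: `T` copies of `M` on the block diagonal followed by one zero block. -/
def blkDiag {p q : ℕ} (T : ℕ) (M : Matrix (Fin p) (Fin q) ℝ) :
    Matrix (Fin (T+1) × Fin p) (Fin (T+1) × Fin q) ℝ :=
  Matrix.of fun i j => if (i.1 = j.1 ∧ (i.1 : ℕ) < T) then M i.2 j.2 else 0

/-- strictly block lower triangular -/
def IsSBLT {T p q : ℕ} (M : Matrix (Fin (T+1) × Fin p) (Fin (T+1) × Fin q) ℝ) : Prop :=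
  ∀ (i j : Fin (T+1)) (a : Fin p) (b : Fin q), i ≤ j → M (i, a) (j, b) = 0

lemma blt_mul {T p q r : ℕ} {M : Matrix (Fin (T+1) × Fin p) (Fin (T+1) × Fin q) ℝ}
    {N : Matrix (Fin (T+1) × Fin q) (Fin (T+1) × Fin r) ℝ}
    (hM : IsBLT M) (hN : IsBLT N) : IsBLT (M * N) := by
  intro i j a b hij
  rw [Matrix.mul_apply]
  apply Finset.sum_eq_zero
  rintro ⟨k, c⟩ -
  by_cases h : i < k
  · rw [hM i k a c h, zero_mul]
  · rw [hN k j c b (lt_of_le_of_lt (not_lt.mp h) hij), mul_zero]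

lemma sblt_mul_blt {T p q r : ℕ} {M : Matrix (Fin (T+1) × Fin p) (Fin (T+1) × Fin q) ℝ}
    {N : Matrix (Fin (T+1) × Fin q) (Fin (T+1) × Fin r) ℝ}
    (hM : IsSBLT M) (hN : IsBLT N) : IsSBLT (M * N) := by
  intro i j a b hij
  rw [Matrix.mul_apply]
  apply Finset.sum_eq_zero
  rintro ⟨k, c⟩ -
  by_cases h : i ≤ k
  · rw [hM i k a c h, zero_mul]
  · rw [hN k j c b (lt_of_lt_of_le (not_le.mp h) hij), mul_zero]

lemma sblt_dshift_mul_blkdiag {T n q : ℕ} (M : Matrix (Fin n) (Fin q) ℝ) :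
    IsSBLT (dshift T n * blkDiag T M) := by
  intro i j a b hij
  rw [Matrix.mul_apply]
  apply Finset.sum_eq_zero
  rintro ⟨k, c⟩ -
  simp only [dshift, blkDiag, Matrix.of_apply]
  by_cases h : (i : ℕ) = (k : ℕ) + 1 ∧ a = c
  · have hj' : (i : ℕ) ≤ (j : ℕ) := hij
    have : ¬ ((k, c).1 = (j, b).1 ∧ ((k, c).1 : ℕ) < T) := by
      rintro ⟨hkj, -⟩
      have : (k : ℕ) = (j : ℕ) := congrArg Fin.val hkj
      omega
    rw [if_neg this, mul_zero]
  · rw [if_neg h, zero_mul]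

lemma unit_one_add_sblt {T n : ℕ} {N : Matrix (Fin (T+1) × Fin n) (Fin (T+1) × Fin n) ℝ}
    (hN : IsSBLT N) : IsUnit (1 + N) := by
  rw [Matrix.isUnit_iff_isUnit_det]
  have hbt : (1 + N).BlockTriangular (fun p => OrderDual.toDual p.1) := by
    rintro ⟨i, a⟩ ⟨j, b⟩ hlt
    have hij : i < j := hlt
    have h1 : (1 : Matrix (Fin (T+1) × Fin n) (Fin (T+1) × Fin n) ℝ) (i,a) (j,b) = 0 := by
      rw [Matrix.one_apply_ne]
      exact fun h => absurd (congrArg Prod.fst h) (ne_of_lt hij)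
    simp [Matrix.add_apply, h1, hN i j a b hij.le]
  rw [hbt.det]
  apply IsUnit.of_mul_eq_one 1
  rw [mul_one]
  apply Finset.prod_eq_one
  intro k _
  have : (1 + N).toSquareBlock (fun p => OrderDual.toDual p.1) k = 1 := by
    ext ⟨⟨i,a⟩, hi⟩ ⟨⟨j,b⟩, hj⟩
    have hij : i = j := by
      have := hi.trans hj.symm
      exact OrderDual.toDual.injective this
    subst hij
    simp only [Matrix.toSquareBlock_def, Matrix.of_apply, Matrix.add_apply,
      hN i i a b le_rfl, add_zero, Matrix.one_apply, Subtype.ext_iff, Prod.ext_iff,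
      Prod.mk.injEq, true_and, and_true, eq_self_iff_true]
  rw [this, Matrix.det_one]

lemma sblt_neg {T n q : ℕ} {M : Matrix (Fin (T+1) × Fin n) (Fin (T+1) × Fin q) ℝ}
    (hM : IsSBLT M) : IsSBLT (-M) := by
  intro i j a b hij
  simp [hM i j a b hij]

theorem statement3 (nx nu T : ℕ) (hnx : 1 ≤ nx) (hnu : 1 ≤ nu) (hT : 1 ≤ T)
    (Ahat : Matrix (Fin nx) (Fin nx) ℝ) (Bhat : Matrix (Fin nx) (Fin nu) ℝ)
    (Phix Sig : Matrix (Fin (T+1) × Fin nx) (Fin (T+1) × Fin nx) ℝ)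
    (Phiu : Matrix (Fin (T+1) × Fin nu) (Fin (T+1) × Fin nx) ℝ)
    (hPhixBLT : IsBLT Phix) (hPhiuBLT : IsBLT Phiu)
    (haff : (1 - dshift T nx * blkDiag T Ahat) * Phix -
        dshift T nx * blkDiag T Bhat * Phiu = 1)
    (hSigBLT : IsBLT Sig) (hSig : IsUnit Sig) :
    IsBLT (Phix * Sig) ∧ IsBLT (Phiu * Sig) ∧
    (1 - dshift T nx * blkDiag T Ahat) * (Phix * Sig) -
        dshift T nx * blkDiag T Bhat * (Phiu * Sig) = Sig ∧
    IsUnit Phix ∧ IsUnit (Phix * Sig) ∧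
    (Phiu * Sig) * (Phix * Sig)⁻¹ = Phiu * Phix⁻¹ := by
  have hZA := sblt_dshift_mul_blkdiag (T := T) Ahat
  have hZB := sblt_dshift_mul_blkdiag (T := T) Bhat
  have hW : IsSBLT (dshift T nx * blkDiag T Bhat * Phiu) := sblt_mul_blt hZB hPhiuBLT
  -- IsUnit Phix
  have hU : IsUnit (1 - dshift T nx * blkDiag T Ahat) := by
    have := unit_one_add_sblt (sblt_neg hZA)
    rwa [← sub_eq_add_neg] at this
  have hV : IsUnit (1 + dshift T nx * blkDiag T Bhat * Phiu) := unit_one_add_sblt hW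
  have heq : (1 - dshift T nx * blkDiag T Ahat) * Phix =
      1 + dshift T nx * blkDiag T Bhat * Phiu := by
    exact sub_eq_iff_eq_add.mp haff
  have hPhix : IsUnit Phix := by
    rw [Matrix.isUnit_iff_isUnit_det] at *
    have hdet : ((1 - dshift T nx * blkDiag T Ahat) * Phix).det =
        (1 + dshift T nx * blkDiag T Bhat * Phiu).det := by rw [heq]
    rw [Matrix.det_mul] at hdet
    exact isUnit_of_mul_isUnit_right (hdet ▸ hV)
  have hSigdet := (Matrix.isUnit_iff_isUnit_det _).mp hSig
  refine ⟨blt_mul hPhixBLT hSigBLT, blt_mul hPhiuBLT hSigBLT, ?_, hPhix, hPhix.mul hSig, ?_⟩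
  · calc (1 - dshift T nx * blkDiag T Ahat) * (Phix * Sig) -
        dshift T nx * blkDiag T Bhat * (Phiu * Sig)
        = ((1 - dshift T nx * blkDiag T Ahat) * Phix -
            dshift T nx * blkDiag T Bhat * Phiu) * Sig := by
              noncomm_ring
              simp only [Matrix.mul_assoc]
      _ = Sig := by rw [haff, one_mul]
  · rw [Matrix.mul_inv_rev, ← Matrix.mul_assoc, Matrix.mul_assoc Phiu,
      Matrix.mul_nonsing_inv Sig hSigdet, Matrix.mul_one]
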